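/- arXiv:2006.02705 — 2 statements merged into one kernel-verified Lean document; each statement's English description precedes it below -/
import Mathlib

section
/- Let ξ be a random variable on [-δ,δ] with the scaled symmetric Beta(α,α) density p_{α,δ}(t) = (2δ)^{1-2α}/B(α,α) · (δ²-t²)^{α-1}, α>0, δ>0. Then for any u ∈ ℝ, the variance of η = (ξ-u)² equals (4δ²/(2α+1))·[u² + δ²α/((2α+1)(2α+3))]. -/
open MeasureTheory ProbabilityTheory
open scoped ENNReal
open Set


lemma odd_moment (α δ : ℝ) (hδ : 0 < δ) (k : ℕ) (hk : Odd k) :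
    ∫ t in Set.Ioo (-δ) δ, t ^ k * (δ ^ 2 - t ^ 2) ^ (α - 1) = 0 := by
  have h1 : ∫ t in Set.Ioo (-δ) δ, t ^ k * (δ ^ 2 - t ^ 2) ^ (α - 1)
      = ∫ t in (-δ)..δ, t ^ k * (δ ^ 2 - t ^ 2) ^ (α - 1) := by
    rw [intervalIntegral.integral_of_le (by linarith), integral_Ioc_eq_integral_Ioo]
  have h2 := intervalIntegral.integral_comp_neg (a := -δ) (b := δ)
      (fun t => t ^ k * (δ ^ 2 - t ^ 2) ^ (α - 1))
  rw [neg_neg] at h2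
  have h3 : ∀ x : ℝ, (-x) ^ k * (δ ^ 2 - (-x) ^ 2) ^ (α - 1)
      = -(x ^ k * (δ ^ 2 - x ^ 2) ^ (α - 1)) := by
    intro x; rw [hk.neg_pow, neg_sq, neg_mul]
  simp only [h3, intervalIntegral.integral_neg] at h2
  rw [h1]; linarith

lemma moment_rec (α δ : ℝ) (hα : 0 < α) (hδ : 0 < δ)
    (hint : ∀ k : ℕ, IntegrableOn (fun t => t ^ k * (δ ^ 2 - t ^ 2) ^ (α - 1)) (Set.Ioo (-δ) δ))
    (k : ℕ) :
    ((k : ℝ) + 1 + 2 * α) * ∫ t in Set.Ioo (-δ) δ, t ^ (k + 2) * (δ ^ 2 - t ^ 2) ^ (α - 1)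
      = ((k : ℝ) + 1) * δ ^ 2 * ∫ t in Set.Ioo (-δ) δ, t ^ k * (δ ^ 2 - t ^ 2) ^ (α - 1) := by
  set F : ℝ → ℝ := fun t => t ^ (k + 1) * (δ ^ 2 - t ^ 2) ^ α with hF
  set G : ℝ → ℝ := fun t => ((k : ℝ) + 1) * δ ^ 2 * (t ^ k * (δ ^ 2 - t ^ 2) ^ (α - 1))
      - ((k : ℝ) + 1 + 2 * α) * (t ^ (k + 2) * (δ ^ 2 - t ^ 2) ^ (α - 1)) with hG
  have hderiv : ∀ t ∈ Set.Ioo (-δ) δ, HasDerivAt F (G t) t := by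
    intro t ht
    have hpos : 0 < δ ^ 2 - t ^ 2 := by nlinarith [ht.1, ht.2]
    have h1 : HasDerivAt (fun t : ℝ => δ ^ 2 - t ^ 2) (-(2 * t)) t := by
      simpa using ((hasDerivAt_pow 2 t).const_sub (δ ^ 2))
    have h2 : HasDerivAt (fun y : ℝ => y ^ α) (α * (δ ^ 2 - t ^ 2) ^ (α - 1)) (δ ^ 2 - t ^ 2) :=
      Real.hasDerivAt_rpow_const (Or.inl hpos.ne')
    have h3 : HasDerivAt (fun t : ℝ => (δ ^ 2 - t ^ 2) ^ α)
        (α * (δ ^ 2 - t ^ 2) ^ (α - 1) * (-(2 * t))) t := by have := h2.comp t h1; exact this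
    have h4 : HasDerivAt F ((((k : ℕ) + 1 : ℕ) : ℝ) * t ^ k * (δ ^ 2 - t ^ 2) ^ α
        + t ^ (k + 1) * (α * (δ ^ 2 - t ^ 2) ^ (α - 1) * (-(2 * t)))) t := by
      exact HasDerivAt.congr_deriv ((hasDerivAt_pow (k + 1) t).mul h3) (by rw [Nat.add_sub_cancel])
    have hsplit : (δ ^ 2 - t ^ 2) ^ α = (δ ^ 2 - t ^ 2) ^ (α - 1) * (δ ^ 2 - t ^ 2) := by
      have h := Real.rpow_add_one hpos.ne' (α - 1)
      have h' : α - 1 + 1 = α := by ring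
      rw [h'] at h; exact h.symm ▸ rfl
    convert h4 using 1
    rw [hG]
    simp only [Nat.cast_add, Nat.cast_one]
    rw [hsplit]; ring
  have hIoc : ∀ j : ℕ, IntegrableOn (fun t => t ^ j * (δ ^ 2 - t ^ 2) ^ (α - 1))
      (Set.Ioc (-δ) δ) := by
    intro j
    exact (hint j).congr_set_ae (Ioo_ae_eq_Ioc (α := ℝ)).symm |>.congr_set_ae (by rfl)
  have hGint : IntervalIntegrable G volume (-δ) δ := by
    rw [intervalIntegrable_iff_integrableOn_Ioc_of_le (by linarith)]
    exact ((hIoc k).const_mul _).sub ((hIoc (k + 2)).const_mul _)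
  have hFcont : Continuous F := by
    have : Continuous fun y : ℝ => y ^ α :=
      continuous_iff_continuousAt.2 fun x => Real.continuousAt_rpow_const x α (Or.inr hα.le)
    exact (continuous_pow (k + 1)).mul (this.comp (by continuity))
  have hFa : Filter.Tendsto F (nhdsWithin (-δ) (Set.Ioi (-δ))) (nhds 0) := by
    have : F (-δ) = 0 := by
      simp only [hF, neg_sq, sub_self, Real.zero_rpow hα.ne', mul_zero]
    simpa [this] using (hFcont.tendsto (-δ)).mono_left nhdsWithin_le_nhds
  have hFb : Filter.Tendsto F (nhdsWithin δ (Set.Iio δ)) (nhds 0) := by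
    have : F δ = 0 := by
      simp only [hF, sub_self, Real.zero_rpow hα.ne', mul_zero]
    simpa [this] using (hFcont.tendsto δ).mono_left nhdsWithin_le_nhds
  have key : ∫ t in (-δ)..δ, G t = 0 - 0 :=
    intervalIntegral.integral_eq_sub_of_hasDerivAt_of_tendsto (by linarith) hderiv hGint hFa hFb
  rw [intervalIntegral.integral_of_le (by linarith), integral_Ioc_eq_integral_Ioo] at key
  rw [hG] at key
  rw [integral_sub ((hint k).const_mul _) ((hint (k + 2)).const_mul _),
    integral_const_mul, integral_const_mul] at key
  linarith

lemma integral_add3 {X : Type*} [MeasurableSpace X] {μ : Measure X} {f1 f2 f3 : X → ℝ}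
    (h1 : Integrable f1 μ) (h2 : Integrable f2 μ) (h3 : Integrable f3 μ) :
    ∫ t, (f1 t + f2 t + f3 t) ∂μ = (∫ t, f1 t ∂μ) + (∫ t, f2 t ∂μ) + ∫ t, f3 t ∂μ := by
  have h12 : Integrable (fun t => f1 t + f2 t) μ := h1.add h2
  rw [integral_add h12 h3, integral_add h1 h2]

lemma integral_add5 {X : Type*} [MeasurableSpace X] {μ : Measure X} {f1 f2 f3 f4 f5 : X → ℝ}
    (h1 : Integrable f1 μ) (h2 : Integrable f2 μ) (h3 : Integrable f3 μ)
    (h4 : Integrable f4 μ) (h5 : Integrable f5 μ) :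
    ∫ t, (f1 t + f2 t + f3 t + f4 t + f5 t) ∂μ
      = (∫ t, f1 t ∂μ) + (∫ t, f2 t ∂μ) + (∫ t, f3 t ∂μ) + (∫ t, f4 t ∂μ) + ∫ t, f5 t ∂μ := by
  have h12 : Integrable (fun t => f1 t + f2 t) μ := h1.add h2
  have h13 : Integrable (fun t => f1 t + f2 t + f3 t) μ := h12.add h3
  have h14 : Integrable (fun t => f1 t + f2 t + f3 t + f4 t) μ := h13.add h4
  rw [integral_add h14 h5, integral_add h13 h4, integral_add h12 h3, integral_add h1 h2]

/-- The scaled symmetric Beta(α,α) density on (-δ,δ). -/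
noncomputable def betaDensity (α δ : ℝ) (t : ℝ) : ℝ :=
  (2 * δ) ^ (1 - 2 * α) / (Real.Gamma α * Real.Gamma α / Real.Gamma (2 * α)) *
    (δ ^ 2 - t ^ 2) ^ (α - 1)

theorem variance_sq_dist_beta {Ω : Type*} [MeasureSpace Ω]
    [IsProbabilityMeasure (ℙ : Measure Ω)]
    (α δ u : ℝ) (hα : 0 < α) (hδ : 0 < δ)
    (ξ : Ω → ℝ) (hξ : Measurable ξ)
    (hlaw : Measure.map ξ ℙ =
      (volume.restrict (Set.Ioo (-δ) δ)).withDensity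
        (fun t => ENNReal.ofReal (betaDensity α δ t))) :
    variance (fun ω => (ξ ω - u) ^ 2) ℙ =
      4 * δ ^ 2 / (2 * α + 1) * (u ^ 2 + δ ^ 2 * α / ((2 * α + 1) * (2 * α + 3))) := by
  set c : ℝ := (2 * δ) ^ (1 - 2 * α) / (Real.Gamma α * Real.Gamma α / Real.Gamma (2 * α)) with hc
  have hcpos : 0 < c := by
    apply div_pos (Real.rpow_pos_of_pos (by linarith) _)
    exact div_pos (mul_pos (Real.Gamma_pos_of_pos hα) (Real.Gamma_pos_of_pos hα))
      (Real.Gamma_pos_of_pos (by linarith))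
  set g : ℝ → ℝ := fun t => (δ ^ 2 - t ^ 2) ^ (α - 1) with hg
  have hp_eq : ∀ t, betaDensity α δ t = c * g t := fun t => rfl
  have hg_meas : Measurable g := by fun_prop
  have hp_meas : Measurable (betaDensity α δ) := by
    simp only [funext hp_eq]; fun_prop
  have hg_nonneg : ∀ t ∈ Set.Ioo (-δ) δ, 0 ≤ g t := by
    intro t ht
    exact Real.rpow_nonneg (by nlinarith [ht.1, ht.2]) _
  have hp_nonneg : ∀ t ∈ Set.Ioo (-δ) δ, 0 ≤ betaDensity α δ t := by
    intro t ht; rw [hp_eq]; exact mul_nonneg hcpos.le (hg_nonneg t ht)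
  -- the law is a probability measure
  have hprob : IsProbabilityMeasure ((volume.restrict (Set.Ioo (-δ) δ)).withDensity
      (fun t => ENNReal.ofReal (betaDensity α δ t))) := by
    rw [← hlaw]; exact Measure.isProbabilityMeasure_map hξ.aemeasurable
  -- total mass one
  have hmass : ∫⁻ t in Set.Ioo (-δ) δ, ENNReal.ofReal (betaDensity α δ t) = 1 := by
    have h := hprob.measure_univ
    rwa [withDensity_apply _ MeasurableSet.univ, Measure.restrict_univ] at h
  -- integrability of the density
  have hp_int : IntegrableOn (betaDensity α δ) (Set.Ioo (-δ) δ) := by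
    refine ⟨hp_meas.aestronglyMeasurable, ?_⟩
    rw [hasFiniteIntegral_iff_norm]
    have heq : ∀ᵐ t ∂(volume.restrict (Set.Ioo (-δ) δ)),
        ENNReal.ofReal ‖betaDensity α δ t‖ = ENNReal.ofReal (betaDensity α δ t) := by
      filter_upwards [ae_restrict_mem measurableSet_Ioo] with t ht
      rw [Real.norm_eq_abs, abs_of_nonneg (hp_nonneg t ht)]
    rw [lintegral_congr_ae heq, hmass]
    exact ENNReal.one_lt_top
  have hg_int : IntegrableOn g (Set.Ioo (-δ) δ) := by
    have h := hp_int.const_mul c⁻¹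
    refine h.congr (Filter.Eventually.of_forall fun t => ?_)
    simp only [hp_eq, inv_mul_cancel_left₀ hcpos.ne']
  have hint : ∀ k : ℕ, IntegrableOn (fun t => t ^ k * g t) (Set.Ioo (-δ) δ) := by
    intro k
    refine Integrable.mono (hg_int.const_mul (δ ^ k))
      ((measurable_id.pow_const k).mul hg_meas).aestronglyMeasurable ?_
    filter_upwards [ae_restrict_mem measurableSet_Ioo] with t ht
    have habs : |t| ≤ δ := le_of_lt (abs_lt.2 ⟨ht.1, ht.2⟩)
    rw [Real.norm_eq_abs, Real.norm_eq_abs, abs_mul, abs_mul, abs_of_nonneg (hg_nonneg t ht),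
      abs_of_nonneg (pow_nonneg hδ.le k)]
    exact mul_le_mul_of_nonneg_right (by
      rw [abs_pow]; exact pow_le_pow_left₀ (abs_nonneg t) habs k) (hg_nonneg t ht)
  -- notation for moments
  set I : ℕ → ℝ := fun k => ∫ t in Set.Ioo (-δ) δ, t ^ k * g t with hI
  -- normalization
  have hI0 : c * I 0 = 1 := by
    have h1 : ∫ t in Set.Ioo (-δ) δ, betaDensity α δ t = 1 := by
      rw [integral_eq_lintegral_of_nonneg_ae
        (by filter_upwards [ae_restrict_mem measurableSet_Ioo] with t ht using hp_nonneg t ht)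
        hp_meas.aestronglyMeasurable, hmass, ENNReal.toReal_one]
    calc c * I 0 = ∫ t in Set.Ioo (-δ) δ, c * (t ^ 0 * g t) := (integral_const_mul _ _).symm
      _ = 1 := by simpa only [pow_zero, one_mul, ← hp_eq] using h1
  -- expectation transfer
  have key : ∀ h : ℝ → ℝ, Measurable h →
      ∫ ω, h (ξ ω) ∂ℙ = ∫ t in Set.Ioo (-δ) δ, betaDensity α δ t * h t := by
    intro h hh
    rw [← integral_map hξ.aemeasurable hh.aestronglyMeasurable, hlaw]
    rw [show (fun t => ENNReal.ofReal (betaDensity α δ t))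
        = (fun t => ((betaDensity α δ t).toNNReal : ℝ≥0∞)) from rfl]
    rw [integral_withDensity_eq_integral_smul (by fun_prop) h]
    refine integral_congr_ae ?_
    filter_upwards [ae_restrict_mem measurableSet_Ioo] with t ht
    rw [NNReal.smul_def, smul_eq_mul, Real.coe_toNNReal _ (hp_nonneg t ht)]
  -- almost everywhere membership
  have hae_mem : ∀ᵐ ω ∂ℙ, ξ ω ∈ Set.Ioo (-δ) δ := by
    have h0 : Measure.map ξ ℙ (Set.Ioo (-δ) δ)ᶜ = 0 := by
      rw [hlaw, withDensity_apply _ measurableSet_Ioo.compl,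
        Measure.restrict_restrict measurableSet_Ioo.compl, compl_inter_self,
        Measure.restrict_empty, lintegral_zero_measure]
    rw [Measure.map_apply hξ measurableSet_Ioo.compl] at h0
    rw [ae_iff]
    exact h0
  -- Memℒp
  have hMem : MemLp (fun ω => (ξ ω - u) ^ 2) 2 ℙ := by
    refine MemLp.of_bound ((hξ.sub measurable_const).pow_const 2).aestronglyMeasurable
      ((δ + |u|) ^ 2) ?_
    filter_upwards [hae_mem] with ω hω
    have h1 : |ξ ω - u| ≤ δ + |u| := by
      have := abs_lt.2 ⟨hω.1, hω.2⟩
      have := abs_sub_abs_le_abs_sub (ξ ω) u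
      have := abs_sub (ξ ω) u
      calc |ξ ω - u| ≤ |ξ ω| + |u| := abs_sub _ _
        _ ≤ δ + |u| := by linarith [abs_lt.2 ⟨hω.1, hω.2⟩]
    rw [Real.norm_eq_abs, abs_of_nonneg (sq_nonneg _)]
    nlinarith [abs_nonneg (ξ ω - u), abs_nonneg u, sq_abs (ξ ω - u)]
  -- odd moments
  have hI1 : I 1 = 0 := odd_moment α δ hδ 1 ⟨0, by norm_num⟩
  have hI3 : I 3 = 0 := odd_moment α δ hδ 3 ⟨1, by norm_num⟩
  -- recurrences
  have hrec0 : (1 + 2 * α) * I 2 = δ ^ 2 * I 0 := by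
    have h := moment_rec α δ hα hδ hint 0
    simp only [Nat.cast_zero, zero_add, one_mul] at h
    exact h
  have hrec2 : (3 + 2 * α) * I 4 = 3 * δ ^ 2 * I 2 := by
    have h := moment_rec α δ hα hδ hint 2
    norm_num at h
    convert h using 2 <;> ring
  have h2a1 : (0:ℝ) < 2 * α + 1 := by linarith
  have h2a3 : (0:ℝ) < 2 * α + 3 := by linarith
  have hcI2 : c * I 2 = δ ^ 2 / (2 * α + 1) := by
    rw [eq_div_iff h2a1.ne']
    calc c * I 2 * (2 * α + 1) = c * ((1 + 2 * α) * I 2) := by ring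
      _ = c * (δ ^ 2 * I 0) := by rw [hrec0]
      _ = δ ^ 2 * (c * I 0) := by ring
      _ = δ ^ 2 := by rw [hI0, mul_one]
  have hcI4 : c * I 4 = 3 * δ ^ 4 / ((2 * α + 1) * (2 * α + 3)) := by
    rw [eq_div_iff (by positivity)]
    calc c * I 4 * ((2 * α + 1) * (2 * α + 3))
        = (c * ((3 + 2 * α) * I 4)) * (2 * α + 1) := by ring
      _ = (c * (3 * δ ^ 2 * I 2)) * (2 * α + 1) := by rw [hrec2]
      _ = 3 * δ ^ 2 * ((c * I 2) * (2 * α + 1)) := by ring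
      _ = 3 * δ ^ 2 * (δ ^ 2 / (2 * α + 1) * (2 * α + 1)) := by rw [hcI2]
      _ = 3 * δ ^ 4 := by field_simp
  -- expectations
  have hE1 : ∫ ω, (ξ ω - u) ^ 2 ∂ℙ = c * I 2 + u ^ 2 := by
    rw [key (fun t => (t - u) ^ 2) (by fun_prop)]
    have heq : (fun t => betaDensity α δ t * (t - u) ^ 2)
        = fun t => c * (t ^ 2 * g t) + (-2 * u * c) * (t ^ 1 * g t)
          + (u ^ 2 * c) * (t ^ 0 * g t) := by
      funext t; rw [hp_eq]; ring
    rw [heq, integral_add3 ((hint 2).const_mul _) ((hint 1).const_mul _) ((hint 0).const_mul _),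
      integral_const_mul, integral_const_mul, integral_const_mul]
    have e1 : ∫ t in Set.Ioo (-δ) δ, t ^ 1 * g t = I 1 := rfl
    have e0 : ∫ t in Set.Ioo (-δ) δ, t ^ 0 * g t = I 0 := rfl
    rw [e1, e0, hI1]
    have hu : u ^ 2 * c * I 0 = u ^ 2 := by rw [mul_assoc, hI0, mul_one]
    rw [hu]; ring
  have hE2 : ∫ ω, ((ξ ω - u) ^ 2) ^ 2 ∂ℙ = c * I 4 + 6 * u ^ 2 * (c * I 2) + u ^ 4 := by
    rw [key (fun t => ((t - u) ^ 2) ^ 2) (by fun_prop)]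
    have heq : (fun t => betaDensity α δ t * ((t - u) ^ 2) ^ 2)
        = fun t => c * (t ^ 4 * g t) + (-4 * u * c) * (t ^ 3 * g t)
          + (6 * u ^ 2 * c) * (t ^ 2 * g t) + (-4 * u ^ 3 * c) * (t ^ 1 * g t)
          + (u ^ 4 * c) * (t ^ 0 * g t) := by
      funext t; rw [hp_eq]; ring
    rw [heq, integral_add5 ((hint 4).const_mul _) ((hint 3).const_mul _) ((hint 2).const_mul _)
        ((hint 1).const_mul _) ((hint 0).const_mul _),
      integral_const_mul, integral_const_mul, integral_const_mul, integral_const_mul,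
      integral_const_mul]
    have e1 : ∫ t in Set.Ioo (-δ) δ, t ^ 1 * g t = I 1 := rfl
    have e3 : ∫ t in Set.Ioo (-δ) δ, t ^ 3 * g t = I 3 := rfl
    have e0 : ∫ t in Set.Ioo (-δ) δ, t ^ 0 * g t = I 0 := rfl
    rw [e1, e3, e0, hI1, hI3]
    have hu : u ^ 4 * c * I 0 = u ^ 4 := by rw [mul_assoc, hI0, mul_one]
    rw [hu]; ring
  -- conclude
  rw [variance_eq_sub hMem]
  simp only [Pi.pow_apply]
  rw [hE2, hE1, hcI2, hcI4]
  field_simp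
  ring
end

section
/- Let ξ be a random variable on [-δ,δ] with the scaled symmetric Beta(α,α) density p_{α,δ}(t) = (2δ)^{1-2α}/B(α,α)·(δ²-t²)^{α-1}, α>0, δ>0. Then for any u ∈ ℝ, the third central moment of η = (ξ-u)² equals (48αδ⁴/((2α+1)²(2α+3)))·[u² + δ²(2α-1)/(3(2α+5)(2α+1))]. -/
open MeasureTheory ProbabilityTheory
open scoped ENNReal
open scoped NNReal

lemma rbeta_eq_complex {c b : ℝ} (hc : 0 < c) (hb : 0 < b) :
    ((∫ x in Set.Ioo (0:ℝ) 1, x ^ (c-1) * (1-x) ^ (b-1) : ℝ) : ℂ) =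
      Complex.betaIntegral c b := by
  rw [Complex.betaIntegral, intervalIntegral.integral_of_le zero_le_one,
    MeasureTheory.integral_Ioc_eq_integral_Ioo]
  rw [show ((∫ x in Set.Ioo (0:ℝ) 1, x ^ (c-1) * (1-x) ^ (b-1) : ℝ) : ℂ) = ∫ x in Set.Ioo (0:ℝ) 1, ((x ^ (c-1) * (1-x) ^ (b-1) : ℝ) : ℂ) from (integral_ofReal (𝕜 := ℂ)).symm]
  refine setIntegral_congr_fun measurableSet_Ioo (fun x hx => ?_)
  obtain ⟨h0, h1⟩ := hx
  rw [Complex.ofReal_mul, Complex.ofReal_cpow h0.le, Complex.ofReal_cpow (by linarith : (0:ℝ) ≤ 1 - x)]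
  push_cast
  ring

lemma rbeta_succ {a b : ℝ} (ha : 0 < a) (hb : 0 < b) :
    (∫ x in Set.Ioo (0:ℝ) 1, x ^ a * (1 - x) ^ (b - 1)) =
      a / (a + b) * ∫ x in Set.Ioo (0:ℝ) 1, x ^ (a - 1) * (1 - x) ^ (b - 1) := by
  have h1 := rbeta_eq_complex ha hb
  have h2 := rbeta_eq_complex (show (0:ℝ) < a + 1 by linarith) hb
  have hsimp : a + 1 - 1 = a := by ring
  rw [hsimp] at h2
  have hab : (0:ℝ) < a + b := by linarith
  have hG : Complex.Gamma (a + b : ℝ) ≠ 0 :=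
    Complex.Gamma_ne_zero_of_re_pos (by simpa using hab)
  have e1 := Complex.Gamma_mul_Gamma_eq_betaIntegral
    (s := (a:ℝ)) (t := (b:ℝ)) (by simpa using ha) (by simpa using hb)
  have e2 := Complex.Gamma_mul_Gamma_eq_betaIntegral
    (s := ((a:ℝ):ℂ) + 1) (t := ((b:ℝ):ℂ)) (by simp; linarith) (by simpa using hb)
  have ha0 : ((a:ℝ):ℂ) ≠ 0 := by exact_mod_cast ha.ne'
  have hab0 : ((a:ℝ):ℂ) + ((b:ℝ):ℂ) ≠ 0 := by
    rw [← Complex.ofReal_add]; exact_mod_cast hab.ne'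
  have hG' : Complex.Gamma (((a:ℝ):ℂ) + ((b:ℝ):ℂ)) ≠ 0 := by
    rw [← Complex.ofReal_add]; exact hG
  have eG1 : Complex.Gamma (((a:ℝ):ℂ) + 1) = (a:ℂ) * Complex.Gamma (a:ℝ) :=
    Complex.Gamma_add_one _ ha0
  have eG2 : Complex.Gamma (((a:ℝ):ℂ) + 1 + ((b:ℝ):ℂ))
      = (((a:ℝ):ℂ) + ((b:ℝ):ℂ)) * Complex.Gamma (((a:ℝ):ℂ) + ((b:ℝ):ℂ)) := by
    rw [show ((a:ℝ):ℂ) + 1 + ((b:ℝ):ℂ) = (((a:ℝ):ℂ) + ((b:ℝ):ℂ)) + 1 by ring,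
      Complex.Gamma_add_one _ hab0]
  have key : Complex.betaIntegral (((a:ℝ):ℂ) + 1) ((b:ℝ):ℂ)
      = ((a:ℂ) / (((a:ℝ):ℂ) + ((b:ℝ):ℂ))) * Complex.betaIntegral ((a:ℝ):ℂ) ((b:ℝ):ℂ) := by
    rw [div_mul_eq_mul_div, eq_div_iff hab0]
    apply mul_left_cancel₀ hG'
    linear_combination (-Complex.betaIntegral (((a:ℝ):ℂ)+1) ((b:ℝ):ℂ)) * eG2 - e2
      + Complex.Gamma ((b:ℝ):ℂ) * eG1 + ((a:ℝ):ℂ) * e1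
  apply Complex.ofReal_injective
  rw [Complex.ofReal_mul, h1, h2]
  push_cast at key ⊢
  rw [key]

lemma rbeta_integrable {a b : ℝ} (ha : 0 < a) (hb : 0 < b) :
    IntegrableOn (fun x : ℝ => x ^ (a-1) * (1-x) ^ (b-1)) (Set.Ioo (0:ℝ) 1) := by
  have h := Complex.betaIntegral_convergent (u := (a:ℂ)) (v := (b:ℂ))
    (by simpa using ha) (by simpa using hb)
  rw [intervalIntegrable_iff_integrableOn_Ioc_of_le zero_le_one] at h
  have h2 : IntegrableOn (fun x : ℝ => (x:ℂ) ^ ((a:ℂ)-1) * (1-(x:ℂ)) ^ ((b:ℂ)-1))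
      (Set.Ioo (0:ℝ) 1) := h.mono_set Set.Ioo_subset_Ioc_self
  have h3 : IntegrableOn (fun x : ℝ => ((x ^ (a-1) * (1-x) ^ (b-1) : ℝ) : ℂ))
      (Set.Ioo (0:ℝ) 1) := by
    refine h2.congr_fun (fun x hx => ?_) measurableSet_Ioo
    obtain ⟨h0, h1⟩ := hx
    rw [Complex.ofReal_mul, Complex.ofReal_cpow h0.le,
      Complex.ofReal_cpow (by linarith : (0:ℝ) ≤ 1 - x)]
    push_cast
    ring
  simpa [IntegrableOn] using h3.re

lemma sqrt_image (δ : ℝ) (hδ : 0 < δ) :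
    (fun x : ℝ => δ * Real.sqrt x) '' Set.Ioo 0 1 = Set.Ioo 0 δ := by
  ext y
  constructor
  · rintro ⟨x, ⟨hx0, hx1⟩, rfl⟩
    have hs : 0 < Real.sqrt x := Real.sqrt_pos.2 hx0
    have hs1 : Real.sqrt x < 1 := by
      rw [show (1:ℝ) = Real.sqrt 1 by simp]
      exact Real.sqrt_lt_sqrt hx0.le hx1
    exact ⟨mul_pos hδ hs, mul_lt_of_lt_one_right hδ hs1⟩
  · rintro ⟨hy0, hyδ⟩
    refine ⟨(y/δ)^2, ⟨by positivity, ?_⟩, ?_⟩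
    · have : y/δ < 1 := (div_lt_one hδ).2 hyδ
      nlinarith [div_pos hy0 hδ]
    · show δ * Real.sqrt ((y/δ)^2) = y
      rw [Real.sqrt_sq (by positivity)]
      field_simp

lemma sqrt_injOn (δ : ℝ) (hδ : 0 < δ) :
    Set.InjOn (fun x : ℝ => δ * Real.sqrt x) (Set.Ioo 0 1) := by
  intro x hx y hy h
  have h2 : Real.sqrt x = Real.sqrt y := mul_left_cancel₀ hδ.ne' h
  have := Real.sq_sqrt hx.1.le
  rw [h2, Real.sq_sqrt hy.1.le] at this
  exact this.symm

lemma auxHalfSub (α δ : ℝ) (hα : 0 < α) (hδ : 0 < δ) (k : ℕ) :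
    ∫ t in Set.Ioo (0:ℝ) δ, t ^ (2 * k) * (δ ^ 2 - t ^ 2) ^ (α - 1) =
      δ ^ (2 * k) * δ * (δ ^ 2) ^ (α - 1) * (1/2) *
        ∫ x in Set.Ioo (0:ℝ) 1, x ^ ((k:ℝ) + 1 / 2 - 1) * (1 - x) ^ (α - 1) := by
  have hder : ∀ x ∈ Set.Ioo (0:ℝ) 1,
      HasDerivWithinAt (fun x : ℝ => δ * Real.sqrt x) (δ * (1 / (2 * Real.sqrt x)))
        (Set.Ioo 0 1) x := fun x hx =>
    ((Real.hasDerivAt_sqrt hx.1.ne').const_mul δ).hasDerivWithinAt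
  have him := integral_image_eq_integral_abs_deriv_smul measurableSet_Ioo hder
    (sqrt_injOn δ hδ) (fun t => t ^ (2 * k) * (δ ^ 2 - t ^ 2) ^ (α - 1))
  rw [sqrt_image δ hδ] at him
  rw [him, ← integral_const_mul]
  refine setIntegral_congr_fun measurableSet_Ioo (fun x hx => ?_)
  obtain ⟨h0, h1⟩ := hx
  have hs : 0 < Real.sqrt x := Real.sqrt_pos.2 h0
  have hsq : Real.sqrt x ^ 2 = x := Real.sq_sqrt h0.le
  have e1 : (δ * Real.sqrt x) ^ (2 * k) = δ ^ (2 * k) * x ^ k := by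
    rw [mul_pow, pow_mul, pow_mul, hsq]
  have e2 : δ ^ 2 - (δ * Real.sqrt x) ^ 2 = δ ^ 2 * (1 - x) := by
    rw [mul_pow, hsq]; ring
  have e3 : (δ ^ 2 * (1 - x)) ^ (α - 1) = (δ ^ 2) ^ (α - 1) * (1 - x) ^ (α - 1) :=
    Real.mul_rpow (by positivity) (by linarith)
  have e4 : x ^ ((k:ℝ) + 1 / 2 - 1) = x ^ k * (Real.sqrt x)⁻¹ := by
    rw [Real.sqrt_eq_rpow, show (k:ℝ) + 1/2 - 1 = (k:ℝ) + (-(1/2)) by ring,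
      Real.rpow_add h0, Real.rpow_neg h0.le, Real.rpow_natCast]
  simp only [smul_eq_mul, e1, e2, e3, e4]
  rw [abs_of_pos (by positivity)]
  field_simp

lemma auxHalfInt (α δ : ℝ) (hα : 0 < α) (hδ : 0 < δ) (k : ℕ) :
    IntegrableOn (fun t : ℝ => t ^ (2 * k) * (δ ^ 2 - t ^ 2) ^ (α - 1))
      (Set.Ioo (0:ℝ) δ) := by
  have hder : ∀ x ∈ Set.Ioo (0:ℝ) 1,
      HasDerivWithinAt (fun x : ℝ => δ * Real.sqrt x) (δ * (1 / (2 * Real.sqrt x)))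
        (Set.Ioo 0 1) x := fun x hx =>
    ((Real.hasDerivAt_sqrt hx.1.ne').const_mul δ).hasDerivWithinAt
  have him := integrableOn_image_iff_integrableOn_abs_deriv_smul measurableSet_Ioo hder
    (sqrt_injOn δ hδ) (fun t => t ^ (2 * k) * (δ ^ 2 - t ^ 2) ^ (α - 1))
  rw [sqrt_image δ hδ] at him
  rw [him]
  have base : IntegrableOn
      (fun x : ℝ => (δ ^ (2 * k) * δ * (δ ^ 2) ^ (α - 1) * (1/2)) * (x ^ ((k:ℝ) + 1/2 - 1) * (1 - x) ^ (α - 1)))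
      (Set.Ioo (0:ℝ) 1) :=
    (rbeta_integrable (a := (k:ℝ) + 1/2) (b := α) (by positivity) hα).const_mul _
  refine IntegrableOn.congr_fun base (fun x hx => ?_) measurableSet_Ioo
  obtain ⟨h0, h1⟩ := hx
  have hs : 0 < Real.sqrt x := Real.sqrt_pos.2 h0
  have hsq : Real.sqrt x ^ 2 = x := Real.sq_sqrt h0.le
  have e1 : (δ * Real.sqrt x) ^ (2 * k) = δ ^ (2 * k) * x ^ k := by
    rw [mul_pow, pow_mul, pow_mul, hsq]
  have e2 : δ ^ 2 - (δ * Real.sqrt x) ^ 2 = δ ^ 2 * (1 - x) := by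
    rw [mul_pow, hsq]; ring
  have e3 : (δ ^ 2 * (1 - x)) ^ (α - 1) = (δ ^ 2) ^ (α - 1) * (1 - x) ^ (α - 1) :=
    Real.mul_rpow (by positivity) (by linarith)
  have e4 : x ^ ((k:ℝ) + 1 / 2 - 1) = x ^ k * (Real.sqrt x)⁻¹ := by
    rw [Real.sqrt_eq_rpow, show (k:ℝ) + 1/2 - 1 = (k:ℝ) + (-(1/2)) by ring,
      Real.rpow_add h0, Real.rpow_neg h0.le, Real.rpow_natCast]
  simp only [smul_eq_mul, e1, e2, e3, e4]
  rw [abs_of_pos (by positivity)]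
  field_simp

lemma auxNegImage (δ : ℝ) : (fun x : ℝ => -x) '' Set.Ioo 0 δ = Set.Ioo (-δ) 0 := by
  ext y
  simp only [Set.mem_image, Set.mem_Ioo]
  constructor
  · rintro ⟨x, ⟨h0, h1⟩, rfl⟩; constructor <;> linarith
  · rintro ⟨h0, h1⟩; exact ⟨-y, ⟨by linarith, by linarith⟩, by ring⟩

lemma auxFullSub (α δ : ℝ) (hα : 0 < α) (hδ : 0 < δ) (k : ℕ) :
    ∫ t in Set.Ioo (-δ) δ, t ^ (2 * k) * (δ ^ 2 - t ^ 2) ^ (α - 1) =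
      δ ^ (2 * k) * δ * (δ ^ 2) ^ (α - 1) *
        ∫ x in Set.Ioo (0:ℝ) 1, x ^ ((k:ℝ) + 1 / 2 - 1) * (1 - x) ^ (α - 1) := by
  set g : ℝ → ℝ := fun t => t ^ (2 * k) * (δ ^ 2 - t ^ 2) ^ (α - 1) with hg
  have hder : ∀ x ∈ Set.Ioo (0:ℝ) δ,
      HasDerivWithinAt (fun x : ℝ => -x) ((fun _ : ℝ => (-1:ℝ)) x) (Set.Ioo 0 δ) x :=
    fun x _ => (hasDerivAt_neg x).hasDerivWithinAt
  have hinj : Set.InjOn (fun x : ℝ => -x) (Set.Ioo 0 δ) := neg_injective.injOn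
  have heven : ∀ x : ℝ, |(-1 : ℝ)| • g (-x) = g x := by
    intro x
    simp only [hg, smul_eq_mul, abs_neg, abs_one, one_mul]
    rw [Even.neg_pow (even_two_mul k), show δ^2 - (-x)^2 = δ^2 - x^2 by ring]
  have hIntPos := auxHalfInt α δ hα hδ k
  have himint := integrableOn_image_iff_integrableOn_abs_deriv_smul measurableSet_Ioo
    hder hinj g
  rw [auxNegImage δ] at himint
  have hIntNeg : IntegrableOn g (Set.Ioo (-δ) 0) := by
    rw [himint]
    exact IntegrableOn.congr_fun hIntPos (fun x _ => (heven x).symm) measurableSet_Ioo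
  have himeq := integral_image_eq_integral_abs_deriv_smul measurableSet_Ioo hder hinj g
  rw [auxNegImage δ] at himeq
  have hnegeq : ∫ t in Set.Ioo (-δ) 0, g t = ∫ t in Set.Ioo 0 δ, g t := by
    rw [himeq]
    exact setIntegral_congr_fun measurableSet_Ioo (fun x _ => heven x)
  have hdisj : Disjoint (Set.Ioo (-δ) 0) (Set.Ioo (0:ℝ) δ) := by
    rw [Set.disjoint_iff]
    rintro x ⟨⟨_, h1⟩, ⟨h2, _⟩⟩
    exact absurd h1 (not_lt.2 h2.le)
  have hae : (Set.Ioo (-δ) 0 ∪ Set.Ioo 0 δ : Set ℝ) =ᵐ[volume] Set.Ioo (-δ) δ := by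
    rw [MeasureTheory.ae_eq_set]
    constructor
    · refine measure_mono_null (fun x hx => ?_) (measure_empty)
      obtain ⟨hx1, hx2⟩ := hx
      exact absurd (by rcases hx1 with ⟨h1,h2⟩|⟨h1,h2⟩ <;> exact ⟨by linarith, by linarith⟩) hx2
    · refine measure_mono_null (fun x hx => ?_) (measure_singleton (0:ℝ))
      obtain ⟨⟨hx1, hx2⟩, hnot⟩ := hx
      simp only [Set.mem_union, Set.mem_Ioo, not_or, not_and] at hnot
      have h0 : x = 0 := by
        by_contra h
        rcases lt_or_gt_of_ne h with hlt | hgt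
        · exact (hnot.1 hx1) hlt |>.elim
        · exact (hnot.2 hgt) hx2 |>.elim
      simp [h0]
  have hsplit : ∫ t in Set.Ioo (-δ) δ, g t
      = (∫ t in Set.Ioo (-δ) 0, g t) + ∫ t in Set.Ioo 0 δ, g t := by
    rw [← setIntegral_union hdisj measurableSet_Ioo hIntNeg hIntPos]
    exact (setIntegral_congr_set hae).symm
  rw [hsplit, hnegeq, auxHalfSub α δ hα hδ k]
  ring

set_option maxHeartbeats 2000000 in
theorem thirdCentralMoment_sq_dist_beta {Ω : Type*} [MeasureSpace Ω]
    [IsProbabilityMeasure (ℙ : Measure Ω)]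
    (α δ u : ℝ) (hα : 0 < α) (hδ : 0 < δ)
    (ξ : Ω → ℝ) (hξ : Measurable ξ)
    (hlaw : Measure.map ξ ℙ =
      (volume.restrict (Set.Ioo (-δ) δ)).withDensity
        (fun t => ENNReal.ofReal (betaDensity α δ t))) :
    ∫ ω, ((ξ ω - u) ^ 2 - ∫ ω', (ξ ω' - u) ^ 2 ∂ℙ) ^ 3 ∂ℙ =
      48 * α * δ ^ 4 / ((2 * α + 1) ^ 2 * (2 * α + 3)) *
        (u ^ 2 + δ ^ 2 * (2 * α - 1) / (3 * (2 * α + 5) * (2 * α + 1))) := by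
  have hA1 : (0:ℝ) < 2 * α + 1 := by linarith
  have hA3 : (0:ℝ) < 2 * α + 3 := by linarith
  have hA5 : (0:ℝ) < 2 * α + 5 := by linarith
  set S : Set ℝ := Set.Ioo (-δ) δ with hS
  set D : ℝ → ℝ := betaDensity α δ with hDdef
  set C₀ : ℝ := (2 * δ) ^ (1 - 2 * α) / (Real.Gamma α * Real.Gamma α / Real.Gamma (2 * α))
    with hC₀
  have hDform : ∀ t, D t = C₀ * (δ ^ 2 - t ^ 2) ^ (α - 1) := fun t => rfl
  set μ : Measure ℝ := Measure.map ξ ℙ with hμ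
  haveI hPμ : IsProbabilityMeasure μ := Measure.isProbabilityMeasure_map hξ.aemeasurable
  have hDmeas : Measurable D := by
    have hfe : D = fun t => C₀ * (δ ^ 2 - t ^ 2) ^ (α - 1) := funext hDform
    rw [hfe]; fun_prop
  have hDnonneg : ∀ t ∈ S, 0 ≤ D t := by
    intro t ht
    obtain ⟨ht1, ht2⟩ := ht
    rw [hDform]
    have h1 : 0 ≤ (2*δ) ^ (1 - 2*α) := Real.rpow_nonneg (by linarith) _
    have h2 : 0 < Real.Gamma α := Real.Gamma_pos_of_pos hα
    have h3 : 0 < Real.Gamma (2*α) := Real.Gamma_pos_of_pos (by linarith)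
    have h4 : 0 ≤ (δ^2 - t^2) ^ (α - 1) := Real.rpow_nonneg (by nlinarith) _
    rw [hC₀]
    positivity
  -- transfer
  have htrans : ∀ g : ℝ → ℝ, Measurable g →
      ∫ t, g t ∂μ = ∫ t in S, D t * g t := by
    intro g hg
    rw [hlaw]
    have hmeq : (fun t => ENNReal.ofReal (D t))
        = (fun t => (((fun t => (D t).toNNReal) t : ℝ≥0) : ℝ≥0∞)) := rfl
    rw [hmeq, integral_withDensity_eq_integral_smul hDmeas.real_toNNReal g]
    refine setIntegral_congr_fun measurableSet_Ioo (fun t ht => ?_)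
    rw [NNReal.smul_def, smul_eq_mul, Real.coe_toNNReal _ (hDnonneg t ht)]
  -- a.e. membership
  have hmuS : ∀ᵐ t ∂μ, t ∈ S := by
    rw [ae_iff]
    have hset : {t : ℝ | ¬ t ∈ S} = Sᶜ := rfl
    rw [hset, hlaw, withDensity_apply _ measurableSet_Ioo.compl,
      Measure.restrict_restrict measurableSet_Ioo.compl]
    simp [hS]
  -- integrability of powers
  have hMint : ∀ n : ℕ, Integrable (fun t : ℝ => t^n) μ := by
    intro n
    refine Integrable.mono' (integrable_const (δ^n)) (continuous_pow n).aestronglyMeasurable ?_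
    filter_upwards [hmuS] with t ht
    obtain ⟨h1, h2⟩ := ht
    have habs : |t| ≤ δ := abs_le.2 ⟨h1.le, h2.le⟩
    calc ‖t^n‖ = |t|^n := by rw [Real.norm_eq_abs, abs_pow]
    _ ≤ δ^n := pow_le_pow_left₀ (abs_nonneg t) habs n
  -- odd moments vanish
  have hodd : ∀ j : ℕ, ∫ t, t^(2*j+1) ∂μ = 0 := by
    intro j
    rw [htrans (fun t => t^(2*j+1)) (by fun_prop)]
    rw [← integral_indicator (μ := volume) measurableSet_Ioo]
    set F : ℝ → ℝ := S.indicator (fun t => D t * t^(2*j+1)) with hF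
    have hOdd : ∀ x : ℝ, F (-x) = - F x := by
      intro x
      by_cases hx : x ∈ S
      · have hx' : -x ∈ S := by
          obtain ⟨a, b⟩ := hx; exact ⟨by linarith, by linarith⟩
        rw [hF, Set.indicator_of_mem hx', Set.indicator_of_mem hx]
        have hDev : D (-x) = D x := by rw [hDform, hDform, neg_sq]
        rw [hDev, Odd.neg_pow (odd_two_mul_add_one j)]
        ring
      · have hx' : ¬ (-x ∈ S) := by
          intro h; obtain ⟨a, b⟩ := h; exact hx ⟨by linarith, by linarith⟩
        rw [hF, Set.indicator_of_notMem hx', Set.indicator_of_notMem hx, neg_zero]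
    have h1 : ∫ x, F (-x) = ∫ x, F x := integral_neg_eq_self F volume
    have h2 : ∫ x, F x = - ∫ x, F x := by
      calc ∫ x, F x = ∫ x, F (-x) := h1.symm
      _ = ∫ x, (- F x) := by simp only [hOdd]
      _ = - ∫ x, F x := integral_neg F
    linarith
  -- even moments
  have heven : ∀ j : ℕ, ∫ t, t^(2*j) ∂μ
      = C₀ * (δ ^ (2*j) * δ * (δ^2) ^ (α-1) *
          ∫ x in Set.Ioo (0:ℝ) 1, x ^ ((j:ℝ) + 1/2 - 1) * (1-x) ^ (α-1)) := by
    intro j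
    rw [htrans (fun t => t^(2*j)) (by fun_prop)]
    have hcong : Set.EqOn (fun t => D t * t^(2*j))
        (fun t => C₀ * (t^(2*j) * (δ^2 - t^2) ^ (α-1))) S := by
      intro t _; simp only [hDform]; ring
    rw [setIntegral_congr_fun measurableSet_Ioo hcong, integral_const_mul,
      auxFullSub α δ hα hδ j]
  -- instantiate
  have h0 := heven 0
  have h1 := heven 1
  have h2 := heven 2
  have h3 := heven 3
  norm_num at h0 h1 h2 h3
  have hr1 := rbeta_succ (a := (1/2:ℝ)) (b := α) (by norm_num) hα
  have hr2 := rbeta_succ (a := (3/2:ℝ)) (b := α) (by norm_num) hα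
  have hr3 := rbeta_succ (a := (5/2:ℝ)) (b := α) (by norm_num) hα
  norm_num at hr1 hr2 hr3
  rw [hr1] at h1
  rw [hr2, hr1] at h2
  rw [hr3, hr2, hr1] at h3
  have q1 : (1:ℝ)/2/(1/2+α) = 1/(2*α+1) := by
    rw [div_eq_div_iff (by linarith) (by linarith)]; ring
  have q2 : (3:ℝ)/2/(3/2+α) = 3/(2*α+3) := by
    rw [div_eq_div_iff (by linarith) (by linarith)]; ring
  have q3 : (5:ℝ)/2/(5/2+α) = 5/(2*α+5) := by
    rw [div_eq_div_iff (by linarith) (by linarith)]; ring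
  rw [q1] at h1 h2 h3
  rw [q2] at h2 h3
  rw [q3] at h3
  have hM2 : ∫ t, t^2 ∂μ = δ^2 * (1/(2*α+1)) := by
    rw [h1]; linear_combination (-(δ^2 * (1/(2*α+1)))) * h0
  have hM4 : ∫ t, t^4 ∂μ = δ^4 * (3/(2*α+3)) * (1/(2*α+1)) := by
    rw [h2]; linear_combination (-(δ^4 * (3/(2*α+3)) * (1/(2*α+1)))) * h0
  have hM6 : ∫ t, t^6 ∂μ = δ^6 * (5/(2*α+5)) * (3/(2*α+3)) * (1/(2*α+1)) := by
    rw [h3]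
    linear_combination (-(δ^6 * (5/(2*α+5)) * (3/(2*α+3)) * (1/(2*α+1)))) * h0
  -- transfer main integrals to μ
  set m := ∫ ω', (ξ ω' - u)^2 ∂ℙ with hmdef
  have hsm2 : AEStronglyMeasurable (fun t : ℝ => (t-u)^2) μ :=
    (((continuous_id.sub continuous_const).pow 2)).aestronglyMeasurable
  have hmμ : m = ∫ t, (t-u)^2 ∂μ := by
    rw [hmdef, hμ, integral_map hξ.aemeasurable hsm2]
  have hsm3 : AEStronglyMeasurable (fun t : ℝ => ((t-u)^2 - m)^3) μ :=
    ((((continuous_id.sub continuous_const).pow 2).sub continuous_const).pow 3).aestronglyMeasurable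
  have hLHS : ∫ ω, ((ξ ω - u)^2 - m)^3 ∂ℙ = ∫ t, ((t-u)^2 - m)^3 ∂μ := by
    rw [hμ]; exact (integral_map hξ.aemeasurable hsm3).symm
  have key : ∀ c0 c1 c2 c3 c4 c5 c6 : ℝ,
      ∫ t, (c0 + c1*t^1 + c2*t^2 + c3*t^3 + c4*t^4 + c5*t^5 + c6*t^6) ∂μ
        = c0 + c1*(∫ t, t^1 ∂μ) + c2*(∫ t, t^2 ∂μ) + c3*(∫ t, t^3 ∂μ)
          + c4*(∫ t, t^4 ∂μ) + c5*(∫ t, t^5 ∂μ) + c6*(∫ t, t^6 ∂μ) := by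
    intro c0 c1 c2 c3 c4 c5 c6
    have I0 : Integrable (fun _ : ℝ => c0) μ := integrable_const _
    have I1 := (hMint 1).const_mul c1
    have I2 := (hMint 2).const_mul c2
    have I3 := (hMint 3).const_mul c3
    have I4 := (hMint 4).const_mul c4
    have I5 := (hMint 5).const_mul c5
    have I6 := (hMint 6).const_mul c6
    have A1 : Integrable (fun t : ℝ => c0 + c1*t^1) μ := I0.add I1
    have A2 : Integrable (fun t : ℝ => c0 + c1*t^1 + c2*t^2) μ := A1.add I2
    have A3 : Integrable (fun t : ℝ => c0 + c1*t^1 + c2*t^2 + c3*t^3) μ := A2.add I3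
    have A4 : Integrable (fun t : ℝ => c0 + c1*t^1 + c2*t^2 + c3*t^3 + c4*t^4) μ := A3.add I4
    have A5 : Integrable (fun t : ℝ => c0 + c1*t^1 + c2*t^2 + c3*t^3 + c4*t^4 + c5*t^5) μ :=
      A4.add I5
    simp only [integral_add A5 I6, integral_add A4 I5, integral_add A3 I4,
      integral_add A2 I3, integral_add A1 I2, integral_add I0 I1,
      integral_const_mul, integral_const, measure_univ, ENNReal.toReal_one, probReal_univ,
      smul_eq_mul, one_mul]
  have ho1 : ∫ t, t^(1:ℕ) ∂μ = 0 := by have := hodd 0; norm_num at this ⊢; exact this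
  have ho3 : ∫ t, t^(3:ℕ) ∂μ = 0 := by have := hodd 1; norm_num at this; exact this
  have ho5 : ∫ t, t^(5:ℕ) ∂μ = 0 := by have := hodd 2; norm_num at this; exact this
  have hmEx : m = u^2 + δ^2 * (1/(2*α+1)) := by
    rw [hmμ, show (fun t : ℝ => (t-u)^2)
        = fun t => (u^2 + (-2*u)*t^1 + 1*t^2 + 0*t^3 + 0*t^4 + 0*t^5 + 0*t^6)
      from funext fun t => by ring, key]
    rw [ho1, hM2]; ring
  rw [hLHS, show (fun t : ℝ => ((t-u)^2-m)^3)
      = fun t => ((u^6-3*m*u^4+3*m^2*u^2-m^3) + (-6*u^5+12*m*u^3-6*m^2*u)*t^1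
          + (15*u^4-18*m*u^2+3*m^2)*t^2 + (-20*u^3+12*m*u)*t^3 + (15*u^2-3*m)*t^4
          + (-6*u)*t^5 + 1*t^6)
    from funext fun t => by ring, key]
  rw [ho1, ho3, ho5, hM2, hM4, hM6, hmEx]
  have n1 : (2*α+1 : ℝ) ≠ 0 := ne_of_gt hA1
  have n3 : (2*α+3 : ℝ) ≠ 0 := ne_of_gt hA3
  have n5 : (2*α+5 : ℝ) ≠ 0 := ne_of_gt hA5
  field_simp
  ring
end
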